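/- Let h: ℝⁿ → ℝ be a piecewise-affine function with finitely many affine pieces each having integer linear part, and suppose h is affine on each cell of a complete rational polyhedral fan. Then there exists a convex function g, given as a finite maximum of integer-affine functions, such that h + g is convex; hence h is the difference of two tropical polynomial functions. -/

import Mathlib

/-- A tropical polynomial function on `ℝⁿ`: a finite maximum of functions
`x ↦ a + ⟨α, x⟩` with `a ∈ ℝ` and `α ∈ ℤⁿ`. -/
def IsTropPoly {n : ℕ} (f : (Fin n → ℝ) → ℝ) : Prop :=
  ∃ (Δ : Finset (Fin n → ℤ)) (hΔ : Δ.Nonempty) (a : (Fin n → ℤ) → ℝ),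
    ∀ x : Fin n → ℝ, f x = Δ.sup' hΔ (fun α => a α + ∑ i, (α i : ℝ) * x i)

theorem isTropPoly_of_sup' {n : ℕ} {ι' : Type*} [DecidableEq (Fin n → ℤ)]
    (s : Finset ι') (hs : s.Nonempty)
    (b : ι' → ℝ) (β : ι' → Fin n → ℤ) (f : (Fin n → ℝ) → ℝ)
    (hf : ∀ x, f x = s.sup' hs fun j => b j + ∑ i, (β j i : ℝ) * x i) :
    IsTropPoly f := by
  classical
  refine ⟨s.image β, hs.image β,
    fun αv => if hα : ((s.filter (fun j => β j = αv)).Nonempty)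
      then (s.filter (fun j => β j = αv)).sup' hα b else 0, fun x => ?_⟩
  rw [hf]
  apply le_antisymm
  · apply Finset.sup'_le
    intro j hj
    have hβ : β j ∈ s.image β := Finset.mem_image_of_mem β hj
    refine le_trans ?_ (Finset.le_sup' (f := fun αv => (if hα : ((s.filter (fun j' => β j' = αv)).Nonempty)
      then (s.filter (fun j' => β j' = αv)).sup' hα b else 0) + ∑ i, (αv i : ℝ) * x i) hβ)
    have hne : (s.filter (fun j' => β j' = β j)).Nonempty :=
      ⟨j, Finset.mem_filter.2 ⟨hj, rfl⟩⟩
    rw [dif_pos hne]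
    have hmem : j ∈ s.filter (fun j' => β j' = β j) := Finset.mem_filter.2 ⟨hj, rfl⟩
    exact add_le_add (Finset.le_sup' b hmem) le_rfl
  · apply Finset.sup'_le
    intro αv hαv
    obtain ⟨j0, hj0, hbj0⟩ := Finset.mem_image.1 hαv
    have hne : (s.filter (fun j' => β j' = αv)).Nonempty :=
      ⟨j0, Finset.mem_filter.2 ⟨hj0, hbj0⟩⟩
    show (if hα : ((s.filter (fun j' => β j' = αv)).Nonempty)
      then (s.filter (fun j' => β j' = αv)).sup' hα b else 0) + ∑ i, (αv i : ℝ) * x i ≤ _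
    rw [dif_pos hne, ← le_sub_iff_add_le]
    apply Finset.sup'_le
    intro j hj
    obtain ⟨hjs, hjβ⟩ := Finset.mem_filter.1 hj
    have := Finset.le_sup' (fun j' => b j' + ∑ i, (β j' i : ℝ) * x i) hjs
    rw [le_sub_iff_add_le, hjβ] at *
    exact this

theorem sum_max_eq_sup' {P : Type*} [Fintype P] [DecidableEq P] (A B : P → ℝ) :
    ∑ p, max (A p) (B p) =
      (Finset.univ : Finset (P → Bool)).sup' Finset.univ_nonempty
        (fun χ => ∑ p, (if χ p then A p else B p)) := by
  classical
  apply le_antisymm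
  · have hχ : ∑ p, max (A p) (B p) =
        ∑ p, (if (fun q => decide (B q ≤ A q)) p then A p else B p) := by
      refine Finset.sum_congr rfl fun p _ => ?_
      by_cases hc : B p ≤ A p
      · simp [hc, max_eq_left hc]
      · simp [hc, max_eq_right (le_of_not_ge hc)]
    rw [hχ]
    exact Finset.le_sup' (fun χ : P → Bool => ∑ p, (if χ p then A p else B p))
      (Finset.mem_univ (fun q => decide (B q ≤ A q)))
  · apply Finset.sup'_le
    intro χ _
    apply Finset.sum_le_sum
    intro p _
    by_cases hc : χ p
    · simp [hc, le_max_left]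
    · simp [hc, le_max_right]

theorem convexOn_smul_add_affine {s : Set ℝ} {f : ℝ → ℝ} (hs : ConvexOn ℝ s f)
    (k m q : ℝ) (hk : 0 ≤ k) : ConvexOn ℝ s (fun x => k * f x + (m * x + q)) := by
  refine ⟨hs.1, fun x hx y hy u v hu hv huv => ?_⟩
  obtain rfl : v = 1 - u := by linarith
  have h1 := hs.2 hx hy hu hv huv
  simp only [smul_eq_mul] at h1 ⊢
  have h2 : k * f (u * x + (1 - u) * y) ≤ k * (u * f x + (1 - u) * f y) :=
    mul_le_mul_of_nonneg_left h1 hk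
  nlinarith [h2]

theorem convexOn_univ_of_loc (f : ℝ → ℝ) (hf : Continuous f)
    (hloc : ∀ t : ℝ, ∃ ε > 0, ConvexOn ℝ (Set.Icc (t - ε) (t + ε)) f) :
    ConvexOn ℝ Set.univ f := by
  have key : ∀ a b : ℝ, a < b → ∀ x ∈ Set.Icc a b,
      (b - a) * f x ≤ (b - x) * f a + (x - a) * f b := by
    intro a b hab
    obtain ⟨gd, hgd⟩ : ∃ gd : ℝ → ℝ,
        gd = fun x => (b - a) * f x + ((f a - f b) * x + (a * f b - b * f a)) := ⟨_, rfl⟩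
    have hgdc : Continuous gd := by rw [hgd]; fun_prop
    have hgda : gd a = 0 := by rw [hgd]; ring
    have hgdb : gd b = 0 := by rw [hgd]; ring
    have hloc' : ∀ t : ℝ, ∃ ε > 0, ConvexOn ℝ (Set.Icc (t - ε) (t + ε)) gd := by
      intro t
      obtain ⟨ε, hε, hc⟩ := hloc t
      refine ⟨ε, hε, ?_⟩
      rw [hgd]
      exact convexOn_smul_add_affine hc _ _ _ (by linarith)
    have main : ∀ x ∈ Set.Icc a b, gd x ≤ 0 := by
      by_contra hcon
      push_neg at hcon
      obtain ⟨z, hz, hzmax⟩ := isCompact_Icc.exists_isMaxOn (Set.nonempty_Icc.2 hab.le)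
        hgdc.continuousOn
      have hMpos : 0 < gd z := by
        obtain ⟨w, hw, hwpos⟩ := hcon
        exact lt_of_lt_of_le hwpos (hzmax hw)
      have hScl : IsClosed {x | x ∈ Set.Icc a b ∧ gd x = gd z} := by
        have : {x | x ∈ Set.Icc a b ∧ gd x = gd z} = Set.Icc a b ∩ gd ⁻¹' {gd z} := by
          ext w
          simp only [Set.mem_setOf_eq, Set.mem_inter_iff, Set.mem_preimage,
            Set.mem_singleton_iff]
        rw [this]
        exact isClosed_Icc.inter (isClosed_singleton.preimage hgdc)
      have hSne : ({x | x ∈ Set.Icc a b ∧ gd x = gd z}).Nonempty := ⟨z, hz, rfl⟩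
      have hSbdd : BddAbove {x | x ∈ Set.Icc a b ∧ gd x = gd z} := ⟨b, fun w hw => hw.1.2⟩
      obtain ⟨cc, ⟨hcab, hcM⟩, hcmax⟩ :
          ∃ cc, cc ∈ {x | x ∈ Set.Icc a b ∧ gd x = gd z} ∧
            ∀ w ∈ {x | x ∈ Set.Icc a b ∧ gd x = gd z}, w ≤ cc :=
        ⟨sSup _, hScl.csSup_mem hSne hSbdd, fun w hw => le_csSup hSbdd hw⟩
      have hca : a < cc := by
        rcases eq_or_lt_of_le hcab.1 with heq | hlt
        · exfalso; rw [← heq] at hcM; rw [hgda] at hcM; linarith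
        · exact hlt
      have hcb : cc < b := by
        rcases eq_or_lt_of_le hcab.2 with heq | hlt
        · exfalso; rw [heq] at hcM; rw [hgdb] at hcM; linarith
        · exact hlt
      obtain ⟨ε, hε, hconv⟩ := hloc' cc
      obtain ⟨δ, hδpos, hδε, hδca, hδcb⟩ :
          ∃ δ : ℝ, 0 < δ ∧ δ ≤ ε ∧ δ ≤ cc - a ∧ δ ≤ b - cc :=
        ⟨min ε (min (cc - a) (b - cc)),
          lt_min hε (lt_min (by linarith) (by linarith)), min_le_left _ _,
          le_trans (min_le_right _ _) (min_le_left _ _),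
          le_trans (min_le_right _ _) (min_le_right _ _)⟩
      have hm1 : cc - δ ∈ Set.Icc (cc - ε) (cc + ε) := ⟨by linarith, by linarith⟩
      have hm2 : cc + δ ∈ Set.Icc (cc - ε) (cc + ε) := ⟨by linarith, by linarith⟩
      have hcomb := hconv.2 hm1 hm2 (by norm_num : (0:ℝ) ≤ 1/2) (by norm_num : (0:ℝ) ≤ 1/2)
        (by norm_num)
      have hmid : (1/2 : ℝ) • (cc - δ) + (1/2 : ℝ) • (cc + δ) = cc := by
        simp [smul_eq_mul]; ring
      rw [hmid] at hcomb
      simp only [smul_eq_mul] at hcomb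
      have hle1 : gd (cc - δ) ≤ gd z := hzmax ⟨by linarith, by linarith⟩
      have hle2 : gd (cc + δ) ≤ gd z := hzmax ⟨by linarith, by linarith⟩
      have heq2 : gd (cc + δ) = gd z := by
        rw [hcM] at hcomb
        linarith
      have : cc + δ ≤ cc := hcmax _ ⟨⟨by linarith, by linarith⟩, heq2⟩
      linarith
    intro x hx
    have := main x hx
    simp only [hgd] at this
    linarith
  refine ⟨convex_univ, ?_⟩
  have inner : ∀ x y u v : ℝ, x < y → 0 ≤ u → 0 ≤ v → u + v = 1 →
      f (u * x + v * y) ≤ u * f x + v * f y := by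
    intro x y u v hxy hu hv huv
    obtain rfl : v = 1 - u := by linarith
    set z := u * x + (1 - u) * y with hz
    have hzmem : z ∈ Set.Icc x y := by
      constructor
      · nlinarith
      · nlinarith
    have hk := key x y hxy z hzmem
    have key2 : (y - x) * f z ≤ (y - x) * (u * f x + (1 - u) * f y) := by
      have hyz : y - z = u * (y - x) := by rw [hz]; ring
      have hzx : z - x = (1 - u) * (y - x) := by rw [hz]; ring
      rw [hyz, hzx] at hk
      linarith [hk]
    exact le_of_mul_le_mul_left key2 (by linarith)
  intro x _ y _ u v hu hv huv
  simp only [smul_eq_mul]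
  rcases lt_trichotomy x y with hxy | hxy | hxy
  · exact inner x y u v hxy hu hv huv
  · subst hxy
    have h3 : u * x + v * x = (u + v) * x := by ring
    rw [huv, one_mul] at h3
    rw [h3]
    have h4 : u * f x + v * f x = (u + v) * f x := by ring
    rw [huv, one_mul] at h4
    linarith
  · have := inner y x v u hxy hv hu (by linarith)
    calc f (u * x + v * y) = f (v * y + u * x) := by ring_nf
    _ ≤ v * f y + u * f x := this
    _ = u * f x + v * f y := by ring

theorem exists_affine_right {ι : Type*} [Finite ι] (φ : ℝ → ℝ)
    (D : ι → Set ℝ) (hD : ∀ j, Convex ℝ (D j)) (hcov : ∀ t : ℝ, ∃ j, t ∈ D j)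
    (F : ι → ℝ → ℝ) (hFc : ∀ j, Continuous (F j)) (hφ : Continuous φ)
    (hF : ∀ j, ∀ s ∈ D j, φ s = F j s) (t : ℝ) :
    ∃ j, ∃ ε > 0, ∀ s ∈ Set.Icc t (t + ε), φ s = F j s := by
  classical
  have hpig : ∃ j, {n : ℕ | t + 1/((n:ℝ)+1) ∈ D j}.Infinite := by
    by_contra hfin
    push_neg at hfin
    have huniv : (⋃ j, {n : ℕ | t + 1/((n:ℝ)+1) ∈ D j}) = Set.univ := by
      ext n
      simp only [Set.mem_iUnion, Set.mem_setOf_eq, Set.mem_univ, iff_true]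
      exact hcov _
    exact Set.infinite_univ (huniv ▸ Set.finite_iUnion hfin)
  obtain ⟨j, hinf⟩ := hpig
  obtain ⟨n₀, hn₀⟩ := hinf.nonempty
  refine ⟨j, 1/((n₀:ℝ)+1), by positivity, ?_⟩
  have hioc : ∀ s ∈ Set.Ioc t (t + 1/((n₀:ℝ)+1)), φ s = F j s := by
    intro s hs
    obtain ⟨hts, hse⟩ := hs
    have hst : 0 < s - t := by linarith
    obtain ⟨N, hN⟩ := exists_nat_gt (1/(s - t))
    obtain ⟨m, hm, hmN⟩ := hinf.exists_gt N
    have hNpos : (0:ℝ) < N := lt_of_le_of_lt (by positivity) hN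
    have h2 : 1/((m:ℝ)+1) < 1/(N:ℝ) := by
      apply one_div_lt_one_div_of_lt hNpos
      have : (N:ℝ) < m := by exact_mod_cast hmN
      linarith
    have h3 : 1/(N:ℝ) < s - t := (one_div_lt hNpos hst).2 hN
    have hmem : s ∈ D j := by
      apply (hD j).ordConnected.out hm hn₀
      exact ⟨by linarith, hse⟩
    exact hF j s hmem
  have hne : t ≠ t + 1/((n₀:ℝ)+1) := by
    have : (0:ℝ) < 1/((n₀:ℝ)+1) := by positivity
    linarith
  have hcl := Set.EqOn.closure (fun s hs => hioc s hs) hφ (hFc j)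
  rw [closure_Ioc hne] at hcl
  exact fun s hs => hcl hs

theorem exists_affine_left {ι : Type*} [Finite ι] (φ : ℝ → ℝ)
    (D : ι → Set ℝ) (hD : ∀ j, Convex ℝ (D j)) (hcov : ∀ t : ℝ, ∃ j, t ∈ D j)
    (F : ι → ℝ → ℝ) (hFc : ∀ j, Continuous (F j)) (hφ : Continuous φ)
    (hF : ∀ j, ∀ s ∈ D j, φ s = F j s) (t : ℝ) :
    ∃ j, ∃ ε > 0, ∀ s ∈ Set.Icc (t - ε) t, φ s = F j s := by
  obtain ⟨j, ε, hε, hj⟩ := exists_affine_right (fun u => φ (-u)) (fun j => -(D j))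
    (fun j => (hD j).neg)
    (fun u => by
      obtain ⟨j, hj⟩ := hcov (-u)
      exact ⟨j, by simpa [Set.mem_neg] using hj⟩)
    (fun j u => F j (-u)) (fun j => (hFc j).comp continuous_neg)
    (hφ.comp continuous_neg)
    (fun j s hs => hF j (-s) (Set.mem_neg.1 hs)) (-t)
  refine ⟨j, ε, hε, fun s hs => ?_⟩
  have := hj (-s) ⟨by linarith [hs.2], by linarith [hs.1]⟩
  simpa using this

theorem convexOn_affine {s : Set ℝ} (hs : Convex ℝ s) (p q : ℝ) :
    ConvexOn ℝ s (fun x => p + q * x) := by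
  refine ⟨hs, fun x _ y _ u v hu hv huv => ?_⟩
  simp only [smul_eq_mul]
  obtain rfl : v = 1 - u := by linarith
  exact le_of_eq (by ring)

theorem convexOn_max_affine {s : Set ℝ} (hs : Convex ℝ s) (p q p' q' : ℝ) :
    ConvexOn ℝ s (fun x => max (p + q * x) (p' + q' * x)) := by
  have := (convexOn_affine hs p q).sup (convexOn_affine hs p' q')
  simpa [Pi.sup_def] using this

theorem convexOn_finset_sum {P : Type*} {s : Set ℝ} (hs : Convex ℝ s)
    (t : Finset P) (f : P → ℝ → ℝ) (hf : ∀ p ∈ t, ConvexOn ℝ s (f p)) :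
    ConvexOn ℝ s (fun x => ∑ p ∈ t, f p x) := by
  classical
  induction t using Finset.induction_on with
  | empty => simpa using convexOn_const 0 hs
  | insert a t' hp ih =>
    simp only [Finset.sum_insert hp]
    exact (hf a (Finset.mem_insert_self a t')).add
      (ih fun p hpt => hf p (Finset.mem_insert_of_mem hpt))

theorem convexOn_congr {s : Set ℝ} {f g : ℝ → ℝ} (hg : ConvexOn ℝ s g)
    (he : Set.EqOn f g s) : ConvexOn ℝ s f := by
  refine ⟨hg.1, fun x hx y hy u v hu hv huv => ?_⟩
  rw [he hx, he hy, he (hg.1 hx hy hu hv huv)]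
  exact hg.2 hx hy hu hv huv

theorem oneDim_convex {ι : Type*} [Fintype ι] (φ : ℝ → ℝ) (hφ : Continuous φ)
    (D : ι → Set ℝ) (hD : ∀ j, Convex ℝ (D j)) (hcov : ∀ t : ℝ, ∃ j, t ∈ D j)
    (P Q : ι → ℝ)
    (hF : ∀ j, ∀ s ∈ D j, φ s = P j + Q j * s) :
    ConvexOn ℝ Set.univ
      (fun s => φ s + ∑ p : ι × ι, max (P p.1 + Q p.1 * s) (P p.2 + Q p.2 * s)) := by
  classical
  apply convexOn_univ_of_loc
  · apply hφ.add
    apply continuous_finset_sum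
    intro p _
    exact (continuous_const.add (continuous_const.mul continuous_id)).max
      (continuous_const.add (continuous_const.mul continuous_id))
  intro t
  obtain ⟨j, ε₁, hε₁, hjl⟩ := exists_affine_left φ D hD hcov (fun j s => P j + Q j * s)
    (fun j => continuous_const.add (continuous_const.mul continuous_id)) hφ hF t
  obtain ⟨k, ε₂, hε₂, hkr⟩ := exists_affine_right φ D hD hcov (fun j s => P j + Q j * s)
    (fun j => continuous_const.add (continuous_const.mul continuous_id)) hφ hF t
  refine ⟨min ε₁ ε₂, lt_min hε₁ hε₂, ?_⟩
  have hIcc : Convex ℝ (Set.Icc (t - min ε₁ ε₂) (t + min ε₁ ε₂)) := convex_Icc _ _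
  have hjt : φ t = P j + Q j * t := hjl t ⟨by linarith, le_refl t⟩
  have hkt : φ t = P k + Q k * t := hkr t ⟨le_refl t, by linarith⟩
  have hmem : ∀ s ∈ Set.Icc (t - min ε₁ ε₂) (t + min ε₁ ε₂),
      (s ≤ t → φ s = P j + Q j * s) ∧ (t ≤ s → φ s = P k + Q k * s) := by
    intro s hs
    constructor
    · intro h
      exact hjl s ⟨by have := min_le_left ε₁ ε₂; linarith [hs.1], h⟩
    · intro h
      exact hkr s ⟨h, by have := min_le_right ε₁ ε₂; linarith [hs.2]⟩
  rcases le_or_gt (Q j) (Q k) with hq | hq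
  · -- φ = max of the two affine pieces near t
    refine convexOn_congr (ConvexOn.add (convexOn_max_affine hIcc (P j) (Q j) (P k) (Q k))
      (convexOn_finset_sum hIcc (Finset.univ : Finset (ι × ι))
        (fun p s => max (P p.1 + Q p.1 * s) (P p.2 + Q p.2 * s))
        (fun p _ => convexOn_max_affine hIcc (P p.1) (Q p.1) (P p.2) (Q p.2)))) ?_
    intro s hs
    simp only
    congr 1
    rcases le_total s t with h | h
    · have h1 : φ s = P j + Q j * s := (hmem s hs).1 h
      have h2 : P k + Q k * s ≤ P j + Q j * s := by
        nlinarith [mul_nonneg (sub_nonneg.2 hq) (sub_nonneg.2 h), hjt, hkt]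
      rw [h1]
      exact (max_eq_left h2).symm
    · have h1 : φ s = P k + Q k * s := (hmem s hs).2 h
      have h2 : P j + Q j * s ≤ P k + Q k * s := by
        nlinarith [mul_nonneg (sub_nonneg.2 hq) (sub_nonneg.2 h), hjt, hkt]
      rw [h1]
      exact (max_eq_right h2).symm
  · -- φ = min of the two affine pieces near t
    have hne : j ≠ k := fun hjk => by rw [hjk] at hq; exact lt_irrefl _ hq
    have hmem1 : ((j, k) : ι × ι) ∈ (Finset.univ : Finset (ι × ι)) := Finset.mem_univ _
    have hmem2 : ((k, j) : ι × ι) ∈ (Finset.univ : Finset (ι × ι)).erase (j, k) :=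
      Finset.mem_erase.2 ⟨by simp [Prod.ext_iff, hne, hne.symm], Finset.mem_univ _⟩
    refine convexOn_congr (f := fun s =>
        φ s + ∑ p : ι × ι, max (P p.1 + Q p.1 * s) (P p.2 + Q p.2 * s))
      (g := fun s => ((P j + Q j * s) + (P k + Q k * s) + max (P j + Q j * s) (P k + Q k * s))
        + ∑ p ∈ ((Finset.univ : Finset (ι × ι)).erase (j, k)).erase (k, j),
            max (P p.1 + Q p.1 * s) (P p.2 + Q p.2 * s)) ?_ ?_
    · refine ConvexOn.add ?_ (convexOn_finset_sum hIcc _ _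
        (fun p _ => convexOn_max_affine hIcc (P p.1) (Q p.1) (P p.2) (Q p.2)))
      exact ConvexOn.add (ConvexOn.add (convexOn_affine hIcc (P j) (Q j))
        (convexOn_affine hIcc (P k) (Q k))) (convexOn_max_affine hIcc (P j) (Q j) (P k) (Q k))
    · intro s hs
      have hsum : ∑ p : ι × ι, max (P p.1 + Q p.1 * s) (P p.2 + Q p.2 * s)
          = max (P j + Q j * s) (P k + Q k * s) + (max (P k + Q k * s) (P j + Q j * s)
            + ∑ p ∈ ((Finset.univ : Finset (ι × ι)).erase (j, k)).erase (k, j),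
              max (P p.1 + Q p.1 * s) (P p.2 + Q p.2 * s)) := by
        rw [← Finset.add_sum_erase _ _ hmem1, ← Finset.add_sum_erase _ _ hmem2]
      have hminφ : φ s = min (P j + Q j * s) (P k + Q k * s) := by
        rcases le_total s t with h | h
        · have h1 : φ s = P j + Q j * s := (hmem s hs).1 h
          have h2 : P j + Q j * s ≤ P k + Q k * s := by
            nlinarith [mul_nonneg (sub_nonneg.2 hq.le) (sub_nonneg.2 h), hjt, hkt]
          rw [h1, min_eq_left h2]
        · have h1 : φ s = P k + Q k * s := (hmem s hs).2 h
          have h2 : P k + Q k * s ≤ P j + Q j * s := by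
            nlinarith [mul_nonneg (sub_nonneg.2 hq.le) (sub_nonneg.2 h), hjt, hkt]
          rw [h1, min_eq_right h2]
      simp only [hsum, hminφ, max_comm (P k + Q k * s) (P j + Q j * s)]
      have hmam : min (P j + Q j * s) (P k + Q k * s) + max (P j + Q j * s) (P k + Q k * s)
          = (P j + Q j * s) + (P k + Q k * s) := min_add_max _ _
      linarith [hmam]

theorem thin_convex_closure {n : ℕ} {s : Set (Fin n → ℝ)} (hs : Convex ℝ s)
    (h : interior s = ∅) : interior (closure s) = ∅ := by
  by_contra hne
  have hne' : (interior (closure s)).Nonempty := Set.nonempty_iff_ne_empty.2 hne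
  have h1 : affineSpan ℝ (closure s) = ⊤ :=
    (hs.closure.interior_nonempty_iff_affineSpan_eq_top).1 hne'
  have h2 : closure s ⊆ (affineSpan ℝ s : Set (Fin n → ℝ)) :=
    closure_minimal (subset_affineSpan ℝ s)
      (affineSpan ℝ s).closed_of_finiteDimensional
  have h3 : affineSpan ℝ s = ⊤ := by
    have := affineSpan_le.2 h2
    rw [h1] at this
    exact top_le_iff.1 (le_trans (by simp) this)
  have := (hs.interior_nonempty_iff_affineSpan_eq_top).2 h3
  rw [h] at this
  exact Set.not_nonempty_empty this

theorem affine_comb {n : ℕ} (b : ℝ) (a : Fin n → ℝ) (w1 w2 : Fin n → ℝ) (u v : ℝ)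
    (huv : u + v = 1) :
    b + ∑ i, a i * (u • w1 + v • w2) i
      = u * (b + ∑ i, a i * w1 i) + v * (b + ∑ i, a i * w2 i) := by
  simp only [Pi.add_apply, Pi.smul_apply, smul_eq_mul]
  have hsum : ∑ i, a i * (u * w1 i + v * w2 i)
      = u * ∑ i, a i * w1 i + v * ∑ i, a i * w2 i := by
    rw [Finset.mul_sum, Finset.mul_sum, ← Finset.sum_add_distrib]
    exact Finset.sum_congr rfl fun i _ => by ring
  rw [hsum]
  linear_combination (-b) * huv

theorem affine_le_of_ball {n : ℕ} {F : (Fin n → ℝ) → ℝ} (hF : ConvexOn ℝ Set.univ F)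
    (b : ℝ) (a : Fin n → ℝ) {z : Fin n → ℝ} {r : ℝ} (hr : 0 < r)
    (heq : ∀ w ∈ Metric.ball z r, F w = b + ∑ i, a i * w i) (y : Fin n → ℝ) :
    b + ∑ i, a i * y i ≤ F y := by
  have hd0 : (0:ℝ) ≤ dist y z := dist_nonneg
  obtain ⟨δ, hδ0, hδr⟩ : ∃ δ : ℝ, 0 < δ ∧ δ * dist y z < r := by
    refine ⟨r / (2 * (dist y z + 1)), by positivity, ?_⟩
    rw [div_mul_eq_mul_div, div_lt_iff₀ (by positivity)]
    nlinarith
  have hz'ball : z - δ • (y - z) ∈ Metric.ball z r := by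
    rw [Metric.mem_ball, dist_eq_norm]
    have h1 : z - δ • (y - z) - z = (-δ) • (y - z) := by
      funext i
      simp only [Pi.sub_apply, Pi.smul_apply, smul_eq_mul]
      ring
    rw [h1, norm_smul]
    simp only [Real.norm_eq_abs, abs_neg, abs_of_pos hδ0]
    rw [← dist_eq_norm]
    exact hδr
  have huv : 1/(1+δ) + δ/(1+δ) = 1 := by field_simp
  have hu0 : (0:ℝ) ≤ 1/(1+δ) := by positivity
  have hv0 : (0:ℝ) < δ/(1+δ) := by positivity
  have hcomb : (1/(1+δ)) • (z - δ • (y - z)) + (δ/(1+δ)) • y = z := by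
    funext i
    simp only [Pi.add_apply, Pi.smul_apply, Pi.sub_apply, smul_eq_mul]
    field_simp
    ring
  have hconv := hF.2 (Set.mem_univ (z - δ • (y - z))) (Set.mem_univ y) hu0 hv0.le huv
  rw [hcomb] at hconv
  have hAz : F z = b + ∑ i, a i * z i := heq z (Metric.mem_ball_self hr)
  have hAz' : F (z - δ • (y - z)) = b + ∑ i, a i * (z - δ • (y - z)) i := heq _ hz'ball
  have haff := affine_comb b a (z - δ • (y - z)) y (1/(1+δ)) (δ/(1+δ)) huv
  rw [hcomb] at haff
  rw [hAz, hAz'] at hconv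
  rw [haff] at hconv
  simp only [smul_eq_mul] at hconv
  have : (δ/(1+δ)) * (b + ∑ i, a i * y i) ≤ (δ/(1+δ)) * F y := by linarith
  exact le_of_mul_le_mul_left this hv0

/-- If `h : ℝⁿ → ℝ` is piecewise-affine with finitely many pieces,
each piece a convex cell on which `h` is affine with integer linear part, and
the pieces cover `ℝⁿ`, then there exists a convex function `g`, a finite max of
integer-affine functions, with `h + g` convex; hence `h` is a difference of two
tropical polynomial functions. -/
theorem piecewise_integer_affine_is_difference_of_tropical_polys {n : ℕ}
    (h : (Fin n → ℝ) → ℝ) (hcont : Continuous h)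
    (ι : Type) (_ : Finite ι) (C : ι → Set (Fin n → ℝ))
    (α : ι → Fin n → ℤ) (c : ι → ℝ)
    (hcover : (⋃ k, C k) = Set.univ) (hconv : ∀ k, Convex ℝ (C k))
    (haff : ∀ k, ∀ x ∈ C k, h x = c k + ∑ i, (α k i : ℝ) * x i) :
    ∃ g : (Fin n → ℝ) → ℝ, IsTropPoly g ∧
      ConvexOn ℝ Set.univ (fun x => h x + g x) ∧
      ∃ p q : (Fin n → ℝ) → ℝ, IsTropPoly p ∧ IsTropPoly q ∧ h = p - q := by
  classical
  haveI : Finite ι := ‹Finite ι›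
  haveI := Fintype.ofFinite ι
  have hx0 : (0 : Fin n → ℝ) ∈ ⋃ k, C k := by rw [hcover]; trivial
  obtain ⟨k0, hk0⟩ := Set.mem_iUnion.1 hx0
  haveI : Nonempty ι := ⟨k0⟩
  obtain ⟨L, hL⟩ : ∃ L : ι → (Fin n → ℝ) → ℝ,
      L = fun k x => c k + ∑ i, (α k i : ℝ) * x i := ⟨_, rfl⟩
  obtain ⟨g, hgdef⟩ : ∃ g : (Fin n → ℝ) → ℝ,
      g = fun x => ∑ p : ι × ι, max (L p.1 x) (L p.2 x) := ⟨_, rfl⟩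
  have hLcont : ∀ k, Continuous (L k) := by
    intro k
    rw [hL]
    exact continuous_const.add
      (continuous_finset_sum _ fun i _ => continuous_const.mul (continuous_apply i))
  have hgcont : Continuous g := by
    rw [hgdef]
    exact continuous_finset_sum _ fun p _ => (hLcont p.1).max (hLcont p.2)
  have haffL : ∀ k, ∀ x ∈ C k, h x = L k x := by
    intro k x hx
    rw [hL]
    exact haff k x hx
  have hLaff : ∀ k (w1 w2 : Fin n → ℝ) (u v : ℝ), u + v = 1 →
      L k (u • w1 + v • w2) = u * L k w1 + v * L k w2 := by
    intro k w1 w2 u v huv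
    rw [hL]
    exact affine_comb (c k) (fun i => (α k i : ℝ)) w1 w2 u v huv
  -- coefficient data for the Boolean-choice branches
  obtain ⟨bf, hbf⟩ : ∃ bf : (ι × ι → Bool) → ℝ,
      bf = fun χ => ∑ p : ι × ι, (if χ p then c p.1 else c p.2) := ⟨_, rfl⟩
  obtain ⟨βf, hβf⟩ : ∃ βf : (ι × ι → Bool) → Fin n → ℤ,
      βf = fun χ i => ∑ p : ι × ι, (if χ p then α p.1 i else α p.2 i) := ⟨_, rfl⟩
  have hterm : ∀ (χ : ι × ι → Bool) (x : Fin n → ℝ),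
      (∑ p : ι × ι, if χ p then L p.1 x else L p.2 x)
        = bf χ + ∑ i, (βf χ i : ℝ) * x i := by
    intro χ x
    have h1 : ∀ p : ι × ι, (if χ p then L p.1 x else L p.2 x)
        = (if χ p then c p.1 else c p.2)
          + ∑ i, (if χ p then (α p.1 i : ℝ) else (α p.2 i : ℝ)) * x i := by
      intro p
      rw [hL]
      split_ifs <;> rfl
    rw [Finset.sum_congr rfl fun p _ => h1 p, Finset.sum_add_distrib, hbf, hβf]
    congr 1
    rw [Finset.sum_comm]
    apply Finset.sum_congr rfl
    intro i _
    rw [← Finset.sum_mul]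
    congr 1
    push_cast
    exact Finset.sum_congr rfl fun p _ => by split_ifs <;> rfl
  -- g is a tropical polynomial
  have hgsup : ∀ x, g x = (Finset.univ : Finset (ι × ι → Bool)).sup' Finset.univ_nonempty
      (fun χ => ∑ p : ι × ι, if χ p then L p.1 x else L p.2 x) := by
    intro x
    rw [hgdef]
    exact sum_max_eq_sup' (fun p : ι × ι => L p.1 x) (fun p : ι × ι => L p.2 x)
  have htropg : IsTropPoly g := by
    apply isTropPoly_of_sup' (Finset.univ : Finset (ι × ι → Bool)) Finset.univ_nonempty bf βf
    intro x
    rw [hgsup x]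
    exact Finset.sup'_congr _ rfl fun χ _ => hterm χ x
  -- h + g is convex
  have hconvHG : ConvexOn ℝ Set.univ (fun x => h x + g x) := by
    refine ⟨convex_univ, fun x _ y _ u v hu hv huv => ?_⟩
    obtain ⟨γ, hγ⟩ : ∃ γ : ℝ → Fin n → ℝ, γ = fun t => (1 - t) • x + t • y := ⟨_, rfl⟩
    have hγcont : Continuous γ := by
      rw [hγ]
      exact ((continuous_const.sub continuous_id).smul continuous_const).add
        (continuous_id.smul continuous_const)
    have hγcomb : ∀ (t1 t2 w1 w2 : ℝ), w1 + w2 = 1 →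
        γ (w1 * t1 + w2 * t2) = w1 • γ t1 + w2 • γ t2 := by
      intro t1 t2 w1 w2 hw
      rw [hγ]
      funext i
      simp only [Pi.add_apply, Pi.smul_apply, Pi.sub_apply, smul_eq_mul]
      obtain rfl : w2 = 1 - w1 := by linarith
      ring
    have hline : ∀ k t, L k (γ t) = L k x + (L k y - L k x) * t := by
      intro k t
      have h0 : γ t = (1 - t) • x + t • y := by rw [hγ]
      rw [h0, hLaff k x y (1 - t) t (by ring)]
      ring
    have key := oneDim_convex (fun t => h (γ t)) (hcont.comp hγcont)
      (fun k => γ ⁻¹' C k)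
      (fun k => by
        intro t1 ht1 t2 ht2 w1 w2 hw1 hw2 hw
        simp only [Set.mem_preimage, smul_eq_mul] at *
        rw [hγcomb t1 t2 w1 w2 hw]
        exact hconv k ht1 ht2 hw1 hw2 hw)
      (fun t => by
        have hm : γ t ∈ ⋃ k, C k := by rw [hcover]; trivial
        obtain ⟨k, hk⟩ := Set.mem_iUnion.1 hm
        exact ⟨k, hk⟩)
      (fun k => L k x) (fun k => L k y - L k x)
      (fun k t ht => (haffL k _ ht).trans (hline k t))
    have hγ0 : γ 0 = x := by rw [hγ]; funext i; simp
    have hγ1 : γ 1 = y := by rw [hγ]; funext i; simp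
    have hγv : γ v = u • x + v • y := by
      rw [hγ]
      obtain rfl : u = 1 - v := by linarith
      rfl
    have hgγ : ∀ t, g (γ t) = ∑ p : ι × ι,
        max (L p.1 x + (L p.1 y - L p.1 x) * t) (L p.2 x + (L p.2 y - L p.2 x) * t) := by
      intro t
      rw [hgdef]
      exact Finset.sum_congr rfl fun p _ => by rw [hline, hline]
    have hk := key.2 (Set.mem_univ (0:ℝ)) (Set.mem_univ (1:ℝ)) hu hv huv
    have h01 : u • (0:ℝ) + v • (1:ℝ) = v := by simp [smul_eq_mul]
    rw [h01] at hk
    simp only [smul_eq_mul] at hk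
    have ev : h (γ v) + ∑ p : ι × ι, max (L p.1 x + (L p.1 y - L p.1 x) * v)
        (L p.2 x + (L p.2 y - L p.2 x) * v) = h (u • x + v • y) + g (u • x + v • y) := by
      rw [← hgγ v, hγv]
    have e0 : h (γ 0) + ∑ p : ι × ι, max (L p.1 x + (L p.1 y - L p.1 x) * 0)
        (L p.2 x + (L p.2 y - L p.2 x) * 0) = h x + g x := by
      rw [← hgγ 0, hγ0]
    have e1 : h (γ 1) + ∑ p : ι × ι, max (L p.1 x + (L p.1 y - L p.1 x) * 1)
        (L p.2 x + (L p.2 y - L p.2 x) * 1) = h y + g y := by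
      rw [← hgγ 1, hγ1]
    rw [ev, e0, e1] at hk
    simpa [smul_eq_mul] using hk
  -- h + g is a tropical polynomial (Baire argument)
  obtain ⟨E, hE⟩ : ∃ E : ι × (ι × ι → Bool) → Set (Fin n → ℝ),
      E = fun m => C m.1 ∩ {x | ∀ p : ι × ι,
        if m.2 p then L p.2 x ≤ L p.1 x else L p.1 x ≤ L p.2 x} := ⟨_, rfl⟩
  have hEconv : ∀ m, Convex ℝ (E m) := by
    intro m
    rw [hE]
    apply (hconv m.1).inter
    intro x hx y hy u v hu hv huv
    simp only [Set.mem_setOf_eq] at hx hy ⊢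
    intro p
    have hxp := hx p
    have hyp := hy p
    by_cases hb : m.2 p
    · simp only [if_pos hb] at hxp hyp ⊢
      rw [hLaff p.2 x y u v huv, hLaff p.1 x y u v huv]
      exact add_le_add (mul_le_mul_of_nonneg_left hxp hu) (mul_le_mul_of_nonneg_left hyp hv)
    · simp only [if_neg hb] at hxp hyp ⊢
      rw [hLaff p.2 x y u v huv, hLaff p.1 x y u v huv]
      exact add_le_add (mul_le_mul_of_nonneg_left hxp hu) (mul_le_mul_of_nonneg_left hyp hv)
  have hEcover : ∀ x, ∃ m, x ∈ E m := by
    intro x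
    have hm : x ∈ ⋃ k, C k := by rw [hcover]; trivial
    obtain ⟨k, hk⟩ := Set.mem_iUnion.1 hm
    refine ⟨(k, fun p => decide (L p.2 x ≤ L p.1 x)), ?_⟩
    rw [hE]
    refine ⟨hk, ?_⟩
    simp only [Set.mem_setOf_eq]
    intro p
    by_cases hd : L p.2 x ≤ L p.1 x
    · simp [hd]
    · simp only [decide_eq_false hd, Bool.false_eq_true, if_false]
      linarith [le_of_not_ge hd]
  have hpaff : ∀ m, ∀ x ∈ E m, h x + g x
      = (c m.1 + bf m.2) + ∑ i, ((α m.1 i + βf m.2 i : ℤ) : ℝ) * x i := by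
    intro m x hx
    rw [hE] at hx
    obtain ⟨hx1, hx2⟩ := hx
    simp only [Set.mem_setOf_eq] at hx2
    have hgx : g x = ∑ p : ι × ι, (if m.2 p then L p.1 x else L p.2 x) := by
      rw [hgdef]
      apply Finset.sum_congr rfl
      intro p _
      have hp := hx2 p
      by_cases hb : m.2 p
      · simp only [if_pos hb] at hp ⊢; exact max_eq_left hp
      · simp only [if_neg hb] at hp ⊢; exact max_eq_right hp
    rw [haffL m.1 x hx1, hgx, hterm m.2 x, hL]
    push_cast
    have hsplit : ∑ i, ((α m.1 i : ℝ) + (βf m.2 i : ℝ)) * x i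
        = ∑ i, (α m.1 i : ℝ) * x i + ∑ i, (βf m.2 i : ℝ) * x i := by
      rw [← Finset.sum_add_distrib]
      exact Finset.sum_congr rfl fun i _ => by ring
    rw [hsplit]
    ring
  obtain ⟨W, hWdef⟩ : ∃ W : Set (Fin n → ℝ),
      W = ⋂ m : ι × (ι × ι → Bool),
        (if (interior (E m)).Nonempty then Set.univ else (closure (E m))ᶜ) := ⟨_, rfl⟩
  have hWdense : Dense W := by
    rw [hWdef]
    apply dense_iInter_of_isOpen
    · intro m
      split
      · exact isOpen_univ
      · exact isClosed_closure.isOpen_compl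
    · intro m
      split
      · exact dense_univ
      · rename_i hbad
        rw [← interior_eq_empty_iff_dense_compl]
        apply thin_convex_closure (hEconv m)
        rw [← Set.not_nonempty_iff_eq_empty]
        exact hbad
  have hWgood : ∀ x ∈ W, ∃ m, (interior (E m)).Nonempty ∧ x ∈ E m := by
    intro x hx
    obtain ⟨m, hm⟩ := hEcover x
    refine ⟨m, ?_, hm⟩
    by_contra hbad
    have hx' := Set.mem_iInter.1 (hWdef ▸ hx) m
    rw [if_neg hbad] at hx'
    exact hx' (subset_closure hm)
  obtain ⟨x₀, hx₀⟩ := hWdense.nonempty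
  obtain ⟨m₀, hm₀good, -⟩ := hWgood x₀ hx₀
  have hGoodne : (Finset.univ.filter
      (fun m : ι × (ι × ι → Bool) => (interior (E m)).Nonempty)).Nonempty :=
    ⟨m₀, Finset.mem_filter.2 ⟨Finset.mem_univ _, hm₀good⟩⟩
  have hle : ∀ m ∈ Finset.univ.filter
      (fun m : ι × (ι × ι → Bool) => (interior (E m)).Nonempty),
      ∀ y, (c m.1 + bf m.2) + ∑ i, ((α m.1 i + βf m.2 i : ℤ) : ℝ) * y i ≤ h y + g y := by
    intro m hm y
    obtain ⟨z, hz⟩ := (Finset.mem_filter.1 hm).2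
    obtain ⟨r, hr0, hball⟩ := Metric.mem_nhds_iff.1 (mem_interior_iff_mem_nhds.1 hz)
    exact affine_le_of_ball hconvHG _ (fun i => ((α m.1 i + βf m.2 i : ℤ) : ℝ)) hr0
      (fun w hw => hpaff m w (hball hw)) y
  have hsup : (fun x => h x + g x) = fun x => (Finset.univ.filter
      (fun m : ι × (ι × ι → Bool) => (interior (E m)).Nonempty)).sup' hGoodne
        (fun m => (c m.1 + bf m.2) + ∑ i, ((α m.1 i + βf m.2 i : ℤ) : ℝ) * x i) := by
    apply Continuous.ext_on hWdense (hcont.add hgcont)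
    · rw [continuous_iff_continuousAt]
      intro x
      apply ContinuousAt.finset_sup'_apply
      intro m _
      exact (continuous_const.add (continuous_finset_sum _ fun i _ =>
        continuous_const.mul (continuous_apply i))).continuousAt
    · intro x hx
      obtain ⟨m, hmgood, hmx⟩ := hWgood x hx
      beta_reduce
      apply le_antisymm
      · rw [Pi.add_apply, hpaff m x hmx]
        exact Finset.le_sup'
          (f := fun m : ι × (ι × ι → Bool) =>
            (c m.1 + bf m.2) + ∑ i, ((α m.1 i + βf m.2 i : ℤ) : ℝ) * x i)
          (Finset.mem_filter.2 ⟨Finset.mem_univ _, hmgood⟩)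
      · exact Finset.sup'_le _ _ fun m' hm' => hle m' hm' x
  have htropp : IsTropPoly (fun x => h x + g x) := by
    apply isTropPoly_of_sup' _ hGoodne (fun m : ι × (ι × ι → Bool) => c m.1 + bf m.2)
      (fun m : ι × (ι × ι → Bool) => fun i => α m.1 i + βf m.2 i)
    intro x
    exact congrFun hsup x
  refine ⟨g, htropg, hconvHG, (fun x => h x + g x), g, htropp, htropg, ?_⟩
  funext x
  show h x = (h x + g x) - g x
  ring
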